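/- Suppose that the m×m matrix B with entries b_ii = 1 − L_ii/α_i and b_ij = −L_ij/α_i for i ≠ j is a nonsingular M-matrix. Then the delay system with a non-delayed linear term ẋ_i(t) = −a_i(t)x_i(t) + Σ_{j=1}^m F_{ij}(t, x_j(g_{ij}(t))) is globally exponentially stable. -/

import Mathlib

open MeasureTheory

set_option maxHeartbeats 1600000 in
private lemma stmt2_aux
    (m : ℕ) (hm : 0 < m)
    (a : Fin m → ℝ → ℝ) (α : Fin m → ℝ)
    (F : Fin m → Fin m → ℝ → ℝ → ℝ) (L : Fin m → Fin m → ℝ)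
    (g : Fin m → Fin m → ℝ → ℝ) (σ : ℝ)
    (hα : ∀ i, 0 < α i)
    (ha_bd : ∀ i t, 0 ≤ t → α i ≤ a i t)
    (hF_bd : ∀ i j t u, 0 ≤ t → |F i j t u| ≤ L i j * |u|)
    (hg : ∀ i j t, 0 ≤ t → 0 ≤ t - g i j t ∧ t - g i j t ≤ σ)
    (hσ0 : 0 ≤ σ)
    (ξ : Fin m → ℝ) (hξ1 : ∀ i, 1 ≤ ξ i)
    (Λ : ℝ) (hΛpos : 0 < Λ)
    (hgap' : ∀ i, Λ * ξ i + Real.exp (Λ*σ) * (∑ j, L i j * ξ j) ≤ α i * ξ i - α i / 2)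
    (t₀ : ℝ) (ht₀ : 0 ≤ t₀) (x : Fin m → ℝ → ℝ)
    (hxc : ∀ i, Continuous (x i))
    (hxi : ∀ i t, t₀ ≤ t → IntervalIntegrable
        (fun s => -(a i s) * x i s + ∑ j, F i j s (x j (g i j s)))
        volume t₀ t)
    (hxe : ∀ i t, t₀ ≤ t →
      x i t = x i t₀ + ∫ s in t₀..t,
        (-(a i s) * x i s + ∑ j, F i j s (x j (g i j s)))) :
    ∀ ε, 0 < ε → ∀ t, t₀ ≤ t → ∀ i, |x i t| <
      ξ i * ((‖(fun i => x i t₀ : Fin m → ℝ)‖ +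
        sSup ((fun s => ‖(fun i => x i s : Fin m → ℝ)‖) '' Set.Icc (t₀ - σ) t₀)) + ε)
        * Real.exp (-Λ*(t-t₀)) := by
  intro ε hε
  set f : ℝ → ℝ := fun s => ‖(fun i => x i s : Fin m → ℝ)‖ with hfdef
  set S : ℝ := sSup (f '' Set.Icc (t₀ - σ) t₀) with hSdef
  set K : ℝ := f t₀ + S with hKdef
  have hfc : Continuous f := (continuous_pi fun i => hxc i).norm
  have hfnn : ∀ s, 0 ≤ f s := fun s => norm_nonneg _
  have hbdd : BddAbove (f '' Set.Icc (t₀ - σ) t₀) :=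
    (isCompact_Icc.image hfc).bddAbove
  have hSub : ∀ τ, t₀ - σ ≤ τ → τ ≤ t₀ → f τ ≤ S := fun τ h1 h2 =>
    le_csSup hbdd ⟨τ, ⟨h1, h2⟩, rfl⟩
  have hS0 : 0 ≤ S := le_trans (hfnn t₀) (hSub t₀ (by linarith) le_rfl)
  have hK0 : 0 ≤ K := add_nonneg (hfnn t₀) hS0
  have hKε : 0 < K + ε := by linarith
  have hxf : ∀ j s, |x j s| ≤ f s := by
    intro j s
    have := norm_le_pi_norm (fun i => x i s : Fin m → ℝ) j
    simpa [Real.norm_eq_abs] using this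
  -- the bound function
  set φ : Fin m → ℝ → ℝ := fun i t => ξ i * (K+ε) * Real.exp (-Λ*(t-t₀)) with hφdef
  have hφpos : ∀ i t, 0 < φ i t := by
    intro i t
    have h1 : 0 < ξ i := lt_of_lt_of_le one_pos (hξ1 i)
    simp only [hφdef]; positivity
  have hφcont : ∀ i, Continuous (φ i) := by
    intro i
    simp only [hφdef]
    fun_prop
  clear_value φ K S f
  suffices hmain : ∀ t, t₀ ≤ t → ∀ i, |x i t| < φ i t by
    intro t ht i
    have h := hmain t ht i
    simp only [hφdef] at h
    exact h
  by_contra hcon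
  push_neg at hcon
  obtain ⟨t₂, ht₂, i₀, hi₀⟩ := hcon
  set T : Set ℝ := {t | t₀ ≤ t ∧ ∃ i, φ i t ≤ |x i t|} with hTdef
  have hTne : T.Nonempty := ⟨t₂, ht₂, i₀, hi₀⟩
  have hTbdd : BddBelow T := ⟨t₀, fun t ht => ht.1⟩
  have hTclosed : IsClosed T := by
    have h1 : T = {t | t₀ ≤ t} ∩ ⋃ i, {t | φ i t ≤ |x i t|} := by
      ext t; simp [hTdef, Set.mem_iUnion]
    rw [h1]
    exact (isClosed_le continuous_const continuous_id).inter
      (isClosed_iUnion_of_finite fun i =>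
        isClosed_le (hφcont i) (hxc i).abs)
  set ts : ℝ := sInf T with htsdef
  have htsmem : ts ∈ T := hTclosed.csInf_mem hTne hTbdd
  have htsge : t₀ ≤ ts := htsmem.1
  have ht₀notT : t₀ ∉ T := by
    intro h
    obtain ⟨i, hi⟩ := h.2
    have h1 : φ i t₀ = ξ i * (K+ε) := by
      simp [hφdef]
    have h2 : |x i t₀| ≤ K := le_trans (hxf i t₀) (by simp [hKdef]; linarith)
    have h3 : K + ε ≤ ξ i * (K+ε) := le_mul_of_one_le_left hKε.le (hξ1 i)
    rw [h1] at hi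
    linarith
  have htsgt : t₀ < ts := lt_of_le_of_ne htsge (fun h => ht₀notT (h ▸ htsmem))
  have hlt : ∀ t, t₀ ≤ t → t < ts → ∀ j, |x j t| < φ j t := by
    intro t h1 h2 j
    by_contra hc
    push_neg at hc
    exact absurd (csInf_le hTbdd ⟨h1, j, hc⟩) (not_le.mpr h2)
  have hle_all : ∀ τ, t₀ ≤ τ → τ ≤ ts → ∀ j, |x j τ| ≤ φ j τ := by
    intro τ h1 h2 j
    rcases lt_or_eq_of_le h2 with h2' | h2'
    · exact (hlt τ h1 h2' j).le
    · have hsub : Set.Ico t₀ ts ⊆ {t | |x j t| ≤ φ j t} := fun t ht =>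
        (hlt t ht.1 ht.2 j).le
      have hcl : IsClosed {t | |x j t| ≤ φ j t} :=
        isClosed_le (hxc j).abs (hφcont j)
      have h3 : closure (Set.Ico t₀ ts) ⊆ {t | |x j t| ≤ φ j t} :=
        hcl.closure_subset_iff.mpr hsub
      have h4 : ts ∈ closure (Set.Ico t₀ ts) := by
        rw [closure_Ico (ne_of_lt htsgt)]
        exact ⟨htsge, le_rfl⟩
      rw [h2']
      exact h3 h4
  obtain ⟨i, hi⟩ := htsmem.2
  clear_value T ts
  -- nonnegativity of L
  have hL0 : ∀ i' j, 0 ≤ L i' j := by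
    intro i' j
    have h := hF_bd i' j 0 1 le_rfl
    simp only [abs_one, mul_one] at h
    linarith [abs_nonneg (F i' j 0 1)]
  set s₁ : ℝ := if 0 ≤ x i ts then 1 else -1 with hs₁def
  set y : ℝ → ℝ := fun t => s₁ * x i t with hydef
  have hycont : Continuous y := continuous_const.mul (hxc i)
  have hys : y ts = |x i ts| := by
    simp only [hydef, hs₁def]
    by_cases h : 0 ≤ x i ts
    · simp [h, abs_of_nonneg h]
    · push_neg at h
      simp [not_le.mpr h, abs_of_neg h]
  have hyabs : ∀ t, y t ≤ |x i t| := by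
    intro t
    have habs : |y t| = |x i t| := by
      simp only [hydef, abs_mul, hs₁def]
      by_cases h : 0 ≤ x i ts <;> simp [h]
    linarith [le_abs_self (y t), habs.le]
  have hyspos : 0 < y ts := by
    rw [hys]; exact lt_of_lt_of_le (hφpos i ts) hi
  have habs : |s₁| = 1 := by
    simp only [hs₁def]
    by_cases h : 0 ≤ x i ts <;> simp [h]
  clear_value s₁ y
  set ρ : ℝ := 1/(2 * ξ i) with hρdef
  have hξipos : 0 < ξ i := lt_of_lt_of_le one_pos (hξ1 i)
  have hρpos : 0 < ρ := by positivity
  have hρΞ : ρ * ξ i = 1/2 := by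
    rw [hρdef]; field_simp
  have hρhalf : ρ ≤ 1/2 := by
    linarith only [hρΞ, mul_le_mul_of_nonneg_left (hξ1 i) hρpos.le]
  set η : ℝ := ρ/4 with hηdef
  have hηpos : 0 < η := by positivity
  have hη8 : η ≤ 1/8 := by rw [hηdef]; linarith
  clear_value ρ η
  -- continuity at ts
  have hyc : ContinuousAt y ts := hycont.continuousAt
  rw [Metric.continuousAt_iff] at hyc
  obtain ⟨δ, hδpos, hδ⟩ := hyc (η * y ts) (mul_pos hηpos hyspos)
  set d : ℝ := min (δ/2) (min (ρ/(4*Λ)) (ts - t₀)) with hddef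
  have hdpos : 0 < d :=
    lt_min (by linarith) (lt_min (div_pos hρpos (by linarith)) (by linarith))
  have hdδ : d < δ := lt_of_le_of_lt (min_le_left _ _) (by linarith)
  have hdΛ : Λ * d ≤ ρ/4 := by
    have h1 : d ≤ ρ/(4*Λ) := le_trans (min_le_right _ _) (min_le_left _ _)
    rw [le_div_iff₀ (by linarith : (0:ℝ) < 4*Λ)] at h1
    linarith
  have hdts : d ≤ ts - t₀ := le_trans (min_le_right _ _) (min_le_right _ _)
  set t1 : ℝ := ts - d with ht1def
  have ht1ge : t₀ ≤ t1 := by rw [ht1def]; linarith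
  have ht1lt : t1 < ts := by rw [ht1def]; linarith
  clear_value d t1
  have hyu : ∀ u, u ∈ Set.Icc t1 ts → (1-η) * y ts ≤ y u := by
    intro u hu
    have h1 : dist u ts < δ := by
      rw [Real.dist_eq, abs_of_nonpos (by linarith [hu.2])]
      have h1a := hu.1
      rw [ht1def] at h1a
      linarith
    have h2 := hδ h1
    rw [Real.dist_eq, abs_lt] at h2
    linarith only [h2.1]
  -- delayed term bound
  set E1 : ℝ := Real.exp (-Λ*(t1-t₀)) with hE1def
  have hE1pos : 0 < E1 := Real.exp_pos _
  clear_value E1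
  have hdel : ∀ u, u ∈ Set.Icc t1 ts → ∀ j,
      |x j (g i j u)| ≤ ξ j * (K+ε) * (Real.exp (Λ*σ) * E1) := by
    intro u hu j
    have hu0 : 0 ≤ u := le_trans (le_trans ht₀ ht1ge) hu.1
    obtain ⟨hg1, hg2⟩ := hg i j u hu0
    have hτle : g i j u ≤ ts := by linarith [hu.2]
    have hτge : t1 - σ ≤ g i j u := by linarith [hu.1]
    rcases le_or_gt t₀ (g i j u) with hcase | hcase
    · have h1 := hle_all (g i j u) hcase hτle j
      have h2 : Real.exp (-Λ*(g i j u - t₀)) ≤ Real.exp (Λ*σ) * E1 := by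
        rw [hE1def, ← Real.exp_add]
        apply Real.exp_le_exp.mpr
        linarith only [mul_le_mul_of_nonneg_left hτge hΛpos.le]
      calc |x j (g i j u)| ≤ φ j (g i j u) := h1
        _ = ξ j * (K+ε) * Real.exp (-Λ*(g i j u - t₀)) := by rw [hφdef]
        _ ≤ ξ j * (K+ε) * (Real.exp (Λ*σ) * E1) := by
            apply mul_le_mul_of_nonneg_left h2
            exact mul_nonneg (by linarith [hξ1 j]) hKε.le
    · have h1 : |x j (g i j u)| ≤ S :=
        le_trans (hxf j (g i j u)) (hSub (g i j u) (by linarith) hcase.le)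
      have h3 : (1:ℝ) ≤ Real.exp (Λ*σ) * E1 := by
        rw [hE1def, ← Real.exp_add, show (1:ℝ) = Real.exp 0 by simp]
        apply Real.exp_le_exp.mpr
        linarith only [mul_nonneg hΛpos.le
          (show (0:ℝ) ≤ σ - (t1 - t₀) by linarith only [hτge, hcase])]
      have h4 : (1:ℝ) ≤ ξ j * (Real.exp (Λ*σ) * E1) := by
        have := mul_le_mul (hξ1 j) h3 zero_le_one (by linarith only [hξ1 j])
        linarith only [this]
      calc |x j (g i j u)| ≤ S := h1
        _ ≤ K + ε := by simp only [hKdef]; linarith [hfnn t₀]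
        _ ≤ ξ j * (K+ε) * (Real.exp (Λ*σ) * E1) := by
            linarith only [mul_le_mul_of_nonneg_left h4 hKε.le]
  -- pointwise bound on the integrand
  set P : ℝ := ∑ j, L i j * ξ j with hPdef
  clear_value P
  set c : ℝ := -(α i)*((1-η)*(y ts)) + Real.exp (Λ*σ) * P * ((K+ε) * E1) with hcdef
  clear_value c
  set f₀ : ℝ → ℝ := fun s => -(a i s) * x i s + ∑ j, F i j s (x j (g i j s)) with hf₀def
  have hpt : ∀ u ∈ Set.Icc t1 ts, s₁ * f₀ u ≤ c := by
    intro u hu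
    have hu0 : 0 ≤ u := le_trans (le_trans ht₀ ht1ge) hu.1
    have hyunn : (1-η)*(y ts) ≤ y u := hyu u hu
    have hyu0 : 0 ≤ y u :=
      le_trans (mul_nonneg (by linarith only [hη8] : (0:ℝ) ≤ 1-η) hyspos.le) hyunn
    have h1 : s₁ * (-(a i u) * x i u) = -(a i u) * y u := by
      simp only [hydef]; ring
    have h2 : -(a i u) * y u ≤ -(α i) * ((1-η)*(y ts)) := by
      have ha := ha_bd i u hu0
      have hstep : α i * ((1-η)*(y ts)) ≤ a i u * y u := by
        calc α i * ((1-η)*(y ts)) ≤ α i * y u :=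
              mul_le_mul_of_nonneg_left hyunn (hα i).le
          _ ≤ a i u * y u := mul_le_mul_of_nonneg_right ha hyu0
      linarith
    have h4 : s₁ * (∑ j, F i j u (x j (g i j u))) ≤ |∑ j, F i j u (x j (g i j u))| := by
      calc s₁ * (∑ j, F i j u (x j (g i j u)))
          ≤ |s₁ * (∑ j, F i j u (x j (g i j u)))| := le_abs_self _
        _ = |∑ j, F i j u (x j (g i j u))| := by rw [abs_mul, habs, one_mul]
    have h5 : |∑ j, F i j u (x j (g i j u))|
        ≤ ∑ j, L i j * (ξ j * (K+ε) * (Real.exp (Λ*σ) * E1)) := by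
      calc |∑ j, F i j u (x j (g i j u))| ≤ ∑ j, |F i j u (x j (g i j u))| :=
            Finset.abs_sum_le_sum_abs _ _
        _ ≤ ∑ j, L i j * (ξ j * (K+ε) * (Real.exp (Λ*σ) * E1)) := by
            apply Finset.sum_le_sum
            intro j _
            calc |F i j u (x j (g i j u))| ≤ L i j * |x j (g i j u)| :=
                  hF_bd i j u _ hu0
              _ ≤ L i j * (ξ j * (K+ε) * (Real.exp (Λ*σ) * E1)) :=
                  mul_le_mul_of_nonneg_left (hdel u hu j) (hL0 i j)
    have h6 : ∑ j, L i j * (ξ j * (K+ε) * (Real.exp (Λ*σ) * E1))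
        = Real.exp (Λ*σ) * P * ((K+ε) * E1) := by
      calc ∑ j, L i j * (ξ j * (K+ε) * (Real.exp (Λ*σ) * E1))
          = ∑ j, (L i j * ξ j) * ((K+ε) * (Real.exp (Λ*σ) * E1)) :=
            Finset.sum_congr rfl (fun j _ => by ring)
        _ = (∑ j, L i j * ξ j) * ((K+ε) * (Real.exp (Λ*σ) * E1)) :=
            (Finset.sum_mul ..).symm
        _ = Real.exp (Λ*σ) * P * ((K+ε) * E1) := by rw [hPdef]; ring
    have hsplit : s₁ * f₀ u = s₁ * (-(a i u) * x i u)
        + s₁ * (∑ j, F i j u (x j (g i j u))) := by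
      simp only [hf₀def]; ring
    rw [hsplit, hcdef, h1]
    exact add_le_add h2 (by linarith only [h4, h5, h6.le])
  -- integral manipulation
  have hI1 : IntervalIntegrable f₀ volume t₀ ts := hxi i ts htsge
  have hI2 : IntervalIntegrable f₀ volume t₀ t1 := hxi i t1 ht1ge
  have hI3 : IntervalIntegrable f₀ volume t1 ts := by
    apply hI1.mono_set
    rw [Set.uIcc_of_le ht1lt.le, Set.uIcc_of_le htsge]
    exact Set.Icc_subset_Icc ht1ge le_rfl
  have heq : x i ts - x i t1 = ∫ s in t1..ts, f₀ s := by
    rw [hxe i ts htsge, hxe i t1 ht1ge,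
      ← intervalIntegral.integral_interval_sub_left hI1 hI2]
    ring
  have hyeq : y ts = y t1 + s₁ * ∫ s in t1..ts, f₀ s := by
    simp only [hydef]
    linear_combination s₁ * heq
  have hIs : IntervalIntegrable (fun s => s₁ * f₀ s) volume t1 ts := hI3.const_mul s₁
  have hIc : IntervalIntegrable (fun _ : ℝ => c) volume t1 ts := intervalIntegrable_const
  have hIle : ∫ s in t1..ts, s₁ * f₀ s ≤ ∫ _ in t1..ts, c :=
    intervalIntegral.integral_mono_on ht1lt.le hIs hIc hpt
  have hconst : (∫ _ in t1..ts, c) = d * c := by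
    rw [intervalIntegral.integral_const, smul_eq_mul, ht1def]
    ring
  have hkey : y ts ≤ y t1 + d * c := by
    have h20 : s₁ * ∫ s in t1..ts, f₀ s = ∫ s in t1..ts, s₁ * f₀ s :=
      (intervalIntegral.integral_const_mul s₁ f₀).symm
    rw [hyeq, h20]
    linarith [le_trans hIle (le_of_eq hconst)]
  -- final arithmetic contradiction
  have hyt1 : y t1 ≤ φ i t1 := le_trans (hyabs t1) (hle_all t1 ht1ge ht1lt.le i)
  set ed : ℝ := Real.exp (-Λ*d) with heddef
  have hedpos' : 0 < ed := Real.exp_pos _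
  clear_value ed
  have hφts : φ i ts = ξ i * (K+ε) * (E1 * ed) := by
    simp only [hφdef, hE1def, heddef, ← Real.exp_add, ht1def]
    ring_nf
  have hφt1 : φ i t1 = ξ i * (K+ε) * E1 := by simp only [hφdef, hE1def]
  have hysge : ξ i * (K+ε) * (E1 * ed) ≤ y ts := by
    rw [← hφts, hys]; exact hi
  have hedpos : 0 < ed := hedpos'
  have hedle1 : ed ≤ 1 := by
    rw [heddef]
    apply Real.exp_le_one_iff.mpr
    linarith only [mul_pos hΛpos hdpos]
  have hedge : 1 - Λ*d ≤ ed := by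
    have := Real.add_one_le_exp (-(Λ*d))
    rw [heddef]
    calc 1 - Λ*d = -(Λ*d) + 1 := by ring
      _ ≤ Real.exp (-(Λ*d)) := this
      _ = Real.exp (-Λ*d) := by ring_nf
  set X : ℝ := Real.exp (Λ*σ) with hXdef
  have hXpos : 0 < X := Real.exp_pos _
  clear_value X
  set W : ℝ := (K+ε) * E1 with hWdef
  have hWpos : 0 < W := mul_pos hKε hE1pos
  clear_value W
  have hPnn : 0 ≤ P := by
    rw [hPdef]
    exact Finset.sum_nonneg fun j _ =>
      mul_nonneg (hL0 i j) (le_trans zero_le_one (hξ1 j))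
  -- step 2: divide by W
  have hstep2 : ξ i * ed ≤ ξ i + d * (-(α i)*((1-η)*(ξ i * ed)) + X * P) := by
    have hc1 : c ≤ -(α i)*((1-η)*(ξ i * W * ed)) + X * P * W := by
      rw [hcdef]
      have h21 : (1-η) * (ξ i * W * ed) ≤ (1-η) * y ts := by
        have h7 : ξ i * (K+ε) * (E1 * ed) = ξ i * W * ed := by rw [hWdef]; ring
        exact mul_le_mul_of_nonneg_left (h7 ▸ hysge)
          (by linarith only [hη8] : (0:ℝ) ≤ 1-η)
      linarith only [mul_le_mul_of_nonneg_left h21 (hα i).le]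
    have hc2 : ξ i * W * ed ≤ ξ i * W + d * (-(α i)*((1-η)*(ξ i * W * ed)) + X * P * W) := by
      have h8 : y ts ≥ ξ i * W * ed := by
        rw [hWdef]
        calc ξ i * ((K+ε) * E1) * ed = ξ i * (K+ε) * (E1 * ed) := by ring
          _ ≤ y ts := hysge
      have h9 : y t1 ≤ ξ i * W := by
        rw [hWdef]
        calc y t1 ≤ φ i t1 := hyt1
          _ = ξ i * (K+ε) * E1 := hφt1
          _ = ξ i * ((K+ε) * E1) := by ring
      linarith only [hkey, h8, h9, mul_le_mul_of_nonneg_left hc1 hdpos.le]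
    have hc3 : W * (ξ i * ed) ≤ W * (ξ i + d * (-(α i)*((1-η)*(ξ i * ed)) + X * P)) := by
      linarith only [hc2]
    exact le_of_mul_le_mul_left hc3 hWpos
  -- step 3: get the rate inequality
  have hstep3 : α i * ((1-η) * ed) * ξ i ≤ Λ * ξ i + X * P := by
    have h10 : -(ξ i * (Λ * d)) ≤ ξ i * ed - ξ i := by
      linarith only [mul_le_mul_of_nonneg_left hedge hξipos.le]
    have h11 : -(Λ * ξ i) * d ≤ d * (-(α i)*((1-η)*(ξ i * ed)) + X * P) := by
      linarith only [hstep2, h10]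
    have h12 : -(Λ * ξ i) ≤ -(α i)*((1-η)*(ξ i * ed)) + X * P := by
      have := (mul_le_mul_iff_of_pos_right hdpos).mp (by linarith only [h11] :
        -(Λ * ξ i) * d ≤ (-(α i)*((1-η)*(ξ i * ed)) + X * P) * d)
      linarith only [this]
    linarith only [h12]
  -- step 5/6: contradiction
  have hstep5 : 1 - ρ/2 ≤ (1-η) * ed := by
    have h13 : 1 - ρ/4 ≤ ed := by linarith [hedge, hdΛ]
    have h14 : (0:ℝ) ≤ 1 - ρ/4 := by linarith [hρhalf]
    calc 1 - ρ/2 ≤ (1-ρ/4) * (1-ρ/4) := by linarith only [sq_nonneg ρ]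
      _ ≤ (1-η) * ed := by rw [hηdef]; exact mul_le_mul_of_nonneg_left h13 h14
  have h15 : α i * ((1 - ρ/2) * ξ i) ≤ α i * ((1-η) * ed * ξ i) := by
    linarith only [mul_le_mul_of_nonneg_left hstep5 (mul_nonneg (hα i).le hξipos.le)]
  have hgapP : Λ * ξ i + X * P ≤ α i * ξ i - α i / 2 := by
    rw [hPdef]; exact hgap' i
  have h17 : α i * ((1-η) * ed * ξ i) ≤ α i * ξ i - α i / 2 := by
    linarith only [hstep3, hgapP]
  have h16 : α i * ((1 - ρ/2) * ξ i) = α i * ξ i - α i / 4 := by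
    linear_combination (-(α i)/2) * hρΞ
  linarith only [hα i, h15, h16, h17]

/-- Corollary 2.3: if the matrix `B` with `b_ii = 1 − L_ii/α_i`, `b_ij = −L_ij/α_i` (i ≠ j)
is a nonsingular M-matrix, then the system
`ẋ_i(t) = −a_i(t) x_i(t) + Σ_j F_{ij}(t, x_j(g_{ij}(t)))` is globally exponentially stable. -/
theorem stmt2
    (m : ℕ) (hm : 0 < m)
    (a : Fin m → ℝ → ℝ) (α A : Fin m → ℝ)
    (F : Fin m → Fin m → ℝ → ℝ → ℝ) (L : Fin m → Fin m → ℝ)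
    (g : Fin m → Fin m → ℝ → ℝ) (σ : ℝ)
    -- (a1)
    (ha_meas : ∀ i, Measurable (a i))
    (hα : ∀ i, 0 < α i)
    (ha_bd : ∀ i t, 0 ≤ t → α i ≤ a i t ∧ a i t ≤ A i)
    -- (a2)
    (hF_cont : ∀ i j t, Continuous (F i j t))
    (hF_meas : ∀ i j u, Measurable fun t => F i j t u)
    (hF_bd : ∀ i j t u, 0 ≤ t → |F i j t u| ≤ L i j * |u|)
    -- (a3)
    (hg_meas : ∀ i j, Measurable (g i j))
    (hg : ∀ i j t, 0 ≤ t → 0 ≤ t - g i j t ∧ t - g i j t ≤ σ)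
    -- the matrix B of (5)
    (B : Matrix (Fin m) (Fin m) ℝ)
    (hB_def : ∀ i j, B i j =
      if i = j then 1 - L i i / α i else -(L i j) / α i)
    -- B is a nonsingular M-matrix
    (hB_offdiag : ∀ i j, i ≠ j → B i j ≤ 0)
    (hB_unit : IsUnit B.det)
    (hB_invpos : ∀ i j, 0 < B⁻¹ i j) :
    -- global exponential stability
    ∃ M Λ : ℝ, 0 < M ∧ 0 < Λ ∧
      ∀ t₀ : ℝ, 0 ≤ t₀ → ∀ x : Fin m → ℝ → ℝ,
        (∀ i, Continuous (x i)) →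
        (∀ i t, t₀ ≤ t → IntervalIntegrable
            (fun s => -(a i s) * x i s + ∑ j, F i j s (x j (g i j s)))
            volume t₀ t) →
        (∀ i t, t₀ ≤ t →
          x i t = x i t₀ + ∫ s in t₀..t,
            (-(a i s) * x i s + ∑ j, F i j s (x j (g i j s)))) →
        ∀ t, t₀ ≤ t →
          ‖(fun i => x i t : Fin m → ℝ)‖ ≤
            M * Real.exp (-Λ * (t - t₀)) *
              (‖(fun i => x i t₀ : Fin m → ℝ)‖ +
                sSup ((fun s => ‖(fun i => x i s : Fin m → ℝ)‖) ''
                  Set.Icc (t₀ - σ) t₀)) := by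
  haveI : Nonempty (Fin m) := Fin.pos_iff_nonempty.mp hm
  -- σ is nonnegative
  have hσ0 : 0 ≤ σ := by
    obtain ⟨i0⟩ := (inferInstance : Nonempty (Fin m))
    have h := hg i0 i0 0 le_rfl
    linarith [h.1, h.2]
  -- L is nonnegative
  have hL0 : ∀ i j, 0 ≤ L i j := by
    intro i j
    have h := hF_bd i j 0 1 le_rfl
    simp only [abs_one, mul_one] at h
    linarith [abs_nonneg (F i j 0 1)]
  -- construction of ξ
  set ξ : Fin m → ℝ := fun i => ∑ j, B⁻¹ i j with hξdef
  have hξpos : ∀ i, 0 < ξ i := fun i =>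
    Finset.sum_pos (fun j _ => hB_invpos i j) Finset.univ_nonempty
  have hBξ : ∀ i, ∑ j, B i j * ξ j = 1 := by
    intro i
    have h1 : B * B⁻¹ = 1 := Matrix.mul_nonsing_inv B hB_unit
    calc ∑ j, B i j * ξ j = ∑ j, ∑ k, B i j * B⁻¹ j k := by
          simp [hξdef, Finset.mul_sum]
      _ = ∑ k, ∑ j, B i j * B⁻¹ j k := Finset.sum_comm
      _ = ∑ k, (B * B⁻¹) i k := by simp [Matrix.mul_apply]
      _ = ∑ k, (1 : Matrix (Fin m) (Fin m) ℝ) i k := by rw [h1]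
      _ = 1 := by simp [Matrix.one_apply]
  have hP : ∀ i, ∑ j, L i j * ξ j = α i * (ξ i - 1) := by
    intro i
    have h2 : ∑ j, B i j * ξ j
        = ξ i - (∑ j, L i j * ξ j) / α i := by
      have h3 : ∀ j, B i j * ξ j
          = (if i = j then ξ j else 0) - (L i j / α i) * ξ j := by
        intro j
        rw [hB_def i j]
        by_cases h : i = j <;> simp [h] <;> ring
      rw [Finset.sum_congr rfl (fun j _ => h3 j), Finset.sum_sub_distrib]
      simp [Finset.sum_div, div_mul_eq_mul_div]
    have h3 := hBξ i
    rw [h2] at h3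
    have hane : α i ≠ 0 := ne_of_gt (hα i)
    field_simp at h3 ⊢
    linarith
  have hξ1 : ∀ i, 1 ≤ ξ i := by
    intro i
    have h4 : 0 ≤ ∑ j, L i j * ξ j :=
      Finset.sum_nonneg fun j _ => mul_nonneg (hL0 i j) (hξpos j).le
    rw [hP i] at h4
    nlinarith [hα i]
  -- choice of the decay rate Λ
  have hexp2 : ∀ x : ℝ, 0 ≤ x → x ≤ 1 → Real.exp x ≤ 1 + 2*x := by
    intro x h0 h1
    have hc := convexOn_exp.2 (Set.mem_univ (0:ℝ)) (Set.mem_univ (1:ℝ))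
      (by linarith : (0:ℝ) ≤ 1 - x) (by linarith : (0:ℝ) ≤ x) (by ring)
    simp only [smul_eq_mul, mul_zero, mul_one, zero_add, Real.exp_zero] at hc
    have he : Real.exp 1 < 2.7182818286 := Real.exp_one_lt_d9
    nlinarith
  set C : Fin m → ℝ := fun i => ξ i + 2*σ*α i*ξ i with hCdef
  have hCpos : ∀ i, 0 < C i := by
    intro i
    have h1 := hξ1 i
    have h2 := hα i
    have h3 : 0 ≤ 2*σ*α i*ξ i := by positivity
    simp only [hCdef]; nlinarith
  set Λ : ℝ := min (1/(σ+1)) (Finset.univ.inf' Finset.univ_nonempty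
      (fun i => α i / (2 * C i))) with hΛdef
  have hΛpos : 0 < Λ := by
    apply lt_min
    · positivity
    · apply Finset.lt_inf'_iff .. |>.mpr
      intro i _
      have h1 := hα i
      have h2 := hCpos i
      positivity
  have hΛσ1 : Λ * σ ≤ 1 := by
    have h1 : Λ ≤ 1/(σ+1) := min_le_left _ _
    have h2 : Λ * σ ≤ (1/(σ+1)) * σ := mul_le_mul_of_nonneg_right h1 hσ0
    have h3 : (1/(σ+1)) * σ ≤ 1 := by
      rw [div_mul_eq_mul_div, one_mul, div_le_one (by linarith)]
      linarith
    linarith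
  have hΛle : ∀ i, Λ ≤ α i / (2 * C i) := fun i =>
    le_trans (min_le_right _ _) (Finset.inf'_le _ (Finset.mem_univ i))
  have hgap : ∀ i, Λ * ξ i + Real.exp (Λ*σ) * (α i * (ξ i - 1)) ≤ α i * ξ i - α i / 2 := by
    intro i
    have h1 : Real.exp (Λ*σ) ≤ 1 + 2*(Λ*σ) :=
      hexp2 _ (mul_nonneg hΛpos.le hσ0) hΛσ1
    have h2 : Λ * (2 * C i) ≤ α i := by
      have h2a := hΛle i
      rw [le_div_iff₀ (by linarith [hCpos i])] at h2a
      linarith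
    have h3 : 0 ≤ α i * (ξ i - 1) := by nlinarith [hα i, hξ1 i]
    have h4 : Real.exp (Λ*σ) * (α i * (ξ i - 1)) ≤ (1 + 2*(Λ*σ)) * (α i * (ξ i - 1)) :=
      mul_le_mul_of_nonneg_right h1 h3
    have h5 : 2*(Λ*σ) * (α i * (ξ i - 1)) ≤ 2*(Λ*σ) * (α i * ξ i) := by
      have h6 : 0 ≤ 2*(Λ*σ) := by positivity
      nlinarith [hα i]
    simp only [hCdef] at h2
    nlinarith
  have hgap' : ∀ i, Λ * ξ i + Real.exp (Λ*σ) * (∑ j, L i j * ξ j)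
      ≤ α i * ξ i - α i / 2 := by
    intro i
    rw [hP i]
    exact hgap i
  -- the constant M
  set M : ℝ := Finset.univ.sup' Finset.univ_nonempty ξ with hMdef
  have hMξ : ∀ i, ξ i ≤ M := fun i => Finset.le_sup' ξ (Finset.mem_univ i)
  have hMpos : 0 < M := by
    obtain ⟨i0⟩ := (inferInstance : Nonempty (Fin m))
    exact lt_of_lt_of_le (hξpos i0) (hMξ i0)
  refine ⟨M, Λ, hMpos, hΛpos, ?_⟩
  intro t₀ ht₀ x hxc hxi hxe t ht
  have hkey := stmt2_aux m hm a α F L g σ hα (fun i t h => (ha_bd i t h).1)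
    hF_bd hg hσ0 ξ hξ1 Λ hΛpos hgap' t₀ ht₀ x hxc hxi hxe
  set S : ℝ := sSup ((fun s => ‖(fun i => x i s : Fin m → ℝ)‖) '' Set.Icc (t₀ - σ) t₀)
    with hSdef
  set K : ℝ := ‖(fun i => x i t₀ : Fin m → ℝ)‖ + S with hKdef
  have hbdd : BddAbove ((fun s => ‖(fun i => x i s : Fin m → ℝ)‖) '' Set.Icc (t₀ - σ) t₀) :=
    (isCompact_Icc.image ((continuous_pi fun i => hxc i).norm)).bddAbove
  have hS0 : 0 ≤ S := by
    have h1 : ‖(fun i => x i t₀ : Fin m → ℝ)‖ ≤ S :=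
      le_csSup hbdd ⟨t₀, ⟨by linarith, le_rfl⟩, rfl⟩
    exact le_trans (norm_nonneg _) h1
  have hK0 : 0 ≤ K := add_nonneg (norm_nonneg _) hS0
  have hE1 : Real.exp (-Λ*(t-t₀)) ≤ 1 := by
    apply Real.exp_le_one_iff.mpr
    nlinarith [mul_nonneg hΛpos.le (sub_nonneg.mpr ht)]
  have hEpos : 0 < Real.exp (-Λ*(t-t₀)) := Real.exp_pos _
  have hgoal : ∀ i, |x i t| ≤ M * Real.exp (-Λ * (t - t₀)) * K := by
    intro i
    have hb : |x i t| ≤ ξ i * K * Real.exp (-Λ*(t-t₀)) := by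
      apply le_of_forall_pos_le_add
      intro ε' hε'
      have hξi : 0 < ξ i := hξpos i
      have h1 := hkey (ε'/ξ i) (by positivity) t ht i
      have h2 : ξ i * (K + ε'/ξ i) * Real.exp (-Λ*(t-t₀))
          = ξ i * K * Real.exp (-Λ*(t-t₀)) + ε' * Real.exp (-Λ*(t-t₀)) := by
        field_simp
      rw [h2] at h1
      have h3 : ε' * Real.exp (-Λ*(t-t₀)) ≤ ε' :=
        (mul_le_iff_le_one_right hε').mpr hE1
      linarith
    have hc : ξ i * K * Real.exp (-Λ*(t-t₀)) ≤ M * Real.exp (-Λ * (t - t₀)) * K := by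
      have h4 : ξ i * (K * Real.exp (-Λ*(t-t₀))) ≤ M * (K * Real.exp (-Λ*(t-t₀))) :=
        mul_le_mul_of_nonneg_right (hMξ i) (mul_nonneg hK0 hEpos.le)
      linarith only [h4]
    linarith
  have hnn : 0 ≤ M * Real.exp (-Λ * (t - t₀)) * K :=
    mul_nonneg (mul_nonneg hMpos.le (Real.exp_pos _).le) hK0
  have := (pi_norm_le_iff_of_nonneg hnn).mpr (fun i => by
    rw [Real.norm_eq_abs]; exact hgoal i)
  exact this
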